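/- Let h > 0 and f : ℝ≥0 → ℝ continuous with f(0) = 0, and let t_n and s_n be the n-th returning time and n-th exit time of Λ_{0,h}(f) at level 0. Then the h-cut f_h := f − Λ_{0,h}(f) is non-increasing on each interval [t_n, s_{n+1}] and non-decreasing on each interval [s_{n+1}, t_{n+1}] (whenever these times are finite). -/
import Mathlib


open Set Filter Topology
open scoped NNReal ENNReal

/-- Solution data for the two-sided Skorohod reflection problem of `f` on `[0,h]`:
`c0` and `ch` are the compensators at `0` and at `h`,
and `fun t => f t + ch t + c0 t` is the reflected path `Λ_{0,h}(f)`.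
The support conditions on the measures `dc⁰` and `d(−cʰ)` are phrased as:
the compensator is constant on every (closed) interval on which the reflected
path avoids the corresponding boundary. -/
structure SkorohodPair (h : ℝ) (f c0 ch : ℝ≥0 → ℝ) : Prop where
  cont0 : Continuous c0
  conth : Continuous ch
  init0 : c0 0 = 0
  inith : ch 0 = 0
  mem_Icc : ∀ t, f t + ch t + c0 t ∈ Set.Icc (0 : ℝ) h
  mono0 : Monotone c0
  antih : Antitone ch
  flat0 : ∀ a b : ℝ≥0, a ≤ b → (∀ t ∈ Set.Icc a b, f t + ch t + c0 t ≠ 0) → c0 b = c0 a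
  flath : ∀ a b : ℝ≥0, a ≤ b → (∀ t ∈ Set.Icc a b, f t + ch t + c0 t ≠ h) → ch b = ch a

/-- `eInf S` : infimum of a set of times, in `ℝ≥0∞`, with the convention `inf ∅ = ∞`. -/
noncomputable def eInf (S : Set ℝ≥0) : ℝ≥0∞ := sInf ((fun x : ℝ≥0 => (x : ℝ≥0∞)) '' S)

/-- `eSup S` : supremum of a set of times, in `ℝ≥0∞`. -/
noncomputable def eSup (S : Set ℝ≥0) : ℝ≥0∞ := sSup ((fun x : ℝ≥0 => (x : ℝ≥0∞)) '' S)

/-- `inf_{[a,s]} f`, where the left endpoint `a` may be infinite. -/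
noncomputable def infBetween (f : ℝ≥0 → ℝ) (a : ℝ≥0∞) (s : ℝ≥0) : ℝ :=
  sInf (f '' {u : ℝ≥0 | a ≤ (u : ℝ≥0∞) ∧ u ≤ s})

/-- `sup_{[a,s]} f`, where the left endpoint `a` may be infinite. -/
noncomputable def supBetween (f : ℝ≥0 → ℝ) (a : ℝ≥0∞) (s : ℝ≥0) : ℝ :=
  sSup (f '' {u : ℝ≥0 | a ≤ (u : ℝ≥0∞) ∧ u ≤ s})

/-- `θ_{n+1} = inf {s > τ_n : f s − h = inf_{[τ_n,s]} f}`. -/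
noncomputable def thetaNext (h : ℝ) (f : ℝ≥0 → ℝ) (τ : ℝ≥0∞) : ℝ≥0∞ :=
  eInf {s : ℝ≥0 | τ < (s : ℝ≥0∞) ∧ f s - h = infBetween f τ s}

/-- `τ_{n+1} = inf {s > θ_{n+1} : sup_{[θ_{n+1},s]} f = f s + h}`. -/
noncomputable def tauNext (h : ℝ) (f : ℝ≥0 → ℝ) (τ : ℝ≥0∞) : ℝ≥0∞ :=
  eInf {s : ℝ≥0 | thetaNext h f τ < (s : ℝ≥0∞) ∧
    supBetween f (thetaNext h f τ) s = f s + h}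

/-- The sequence `(τ_n)` of completion times of the sub-excursions of height `h`. -/
noncomputable def tauSeq (h : ℝ) (f : ℝ≥0 → ℝ) : ℕ → ℝ≥0∞
  | 0 => 0
  | n + 1 => tauNext h f (tauSeq h f n)

/-- `σ_{n+1} = sup {s ∈ [τ_n, τ_{n+1}] : f s = inf_{[τ_n,s]} f}` (and `σ₀ = 0`). -/
noncomputable def sigmaSeq (h : ℝ) (f : ℝ≥0 → ℝ) : ℕ → ℝ≥0∞
  | 0 => 0
  | n + 1 => eSup {s : ℝ≥0 | tauSeq h f n ≤ (s : ℝ≥0∞) ∧ (s : ℝ≥0∞) ≤ tauSeq h f (n + 1) ∧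
      f s = infBetween f (tauSeq h f n) s}

/-- The returning times of a path `Λ` to level `0` after visiting level `h`:
`t₀ = 0`, `T_{n+1} = inf {u > t_n : Λ u = h}`, `t_{n+1} = inf {u > T_{n+1} : Λ u = 0}`. -/
noncomputable def retSeq (h : ℝ) (Λ : ℝ≥0 → ℝ) : ℕ → ℝ≥0∞
  | 0 => 0
  | n + 1 =>
      eInf {u : ℝ≥0 |
        eInf {v : ℝ≥0 | retSeq h Λ n < (v : ℝ≥0∞) ∧ Λ v = h} < (u : ℝ≥0∞) ∧ Λ u = 0}

/-- The exit times of `Λ` at level `0`: `s_{n+1} = sup {u ∈ [t_n, t_{n+1}) : Λ u = 0}`. -/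
noncomputable def exitSeq (h : ℝ) (Λ : ℝ≥0 → ℝ) : ℕ → ℝ≥0∞
  | 0 => 0
  | n + 1 => eSup {u : ℝ≥0 | retSeq h Λ n ≤ (u : ℝ≥0∞) ∧ (u : ℝ≥0∞) < retSeq h Λ (n + 1) ∧
      Λ u = 0}

/-- **Proposition 4, item 3**: the `h`-cut `f_h = f − Λ_{0,h}(f)` is non-increasing on each
interval `[t_n, s_{n+1}]` and non-decreasing on each interval `[s_{n+1}, t_{n+1}]`
(these times being finite). -/

private lemma eInf_le_coe' {S : Set ℝ≥0} {u : ℝ≥0} (hu : u ∈ S) : eInf S ≤ (u : ℝ≥0∞) :=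
  sInf_le ⟨u, hu, rfl⟩

private lemma le_eInf' {S : Set ℝ≥0} {t : ℝ≥0∞} (h : ∀ u ∈ S, t ≤ (u : ℝ≥0∞)) : t ≤ eInf S :=
  le_sInf (by rintro _ ⟨u, hu, rfl⟩; exact h u hu)

private lemma coe_le_eSup' {S : Set ℝ≥0} {u : ℝ≥0} (hu : u ∈ S) : (u : ℝ≥0∞) ≤ eSup S :=
  le_sSup ⟨u, hu, rfl⟩

private lemma eSup_le' {S : Set ℝ≥0} {t : ℝ≥0∞} (h : ∀ u ∈ S, (u : ℝ≥0∞) ≤ t) : eSup S ≤ t :=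
  sSup_le (by rintro _ ⟨u, hu, rfl⟩; exact h u hu)

private lemma nonempty_of_eInf_ne_top {S : Set ℝ≥0} (h : eInf S ≠ ⊤) : S.Nonempty := by
  by_contra hS
  rw [Set.not_nonempty_iff_eq_empty] at hS
  simp [eInf, hS] at h

private lemma eInf_mem_closure {S : Set ℝ≥0} {t : ℝ≥0} (h : eInf S = (t : ℝ≥0∞)) :
    t ∈ closure S := by
  have hne : S.Nonempty := nonempty_of_eInf_ne_top (by simp [h])
  have hlb : ∀ u ∈ S, t ≤ u := fun u hu => by
    have := h ▸ eInf_le_coe' hu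
    exact_mod_cast this
  have h1 : t ≤ sInf S := le_csInf hne hlb
  have h2 : sInf S ≤ t := by
    have : ((sInf S : ℝ≥0) : ℝ≥0∞) ≤ eInf S :=
      le_eInf' fun u hu => by exact_mod_cast csInf_le (OrderBot.bddBelow S) hu
    rw [h] at this
    exact_mod_cast this
  have : t = sInf S := le_antisymm h1 h2
  rw [this]
  exact csInf_mem_closure hne (OrderBot.bddBelow S)

private lemma eSup_mem_closure {S : Set ℝ≥0} {t : ℝ≥0} (hne : S.Nonempty)
    (h : eSup S = (t : ℝ≥0∞)) : t ∈ closure S := by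
  have hub : ∀ u ∈ S, u ≤ t := fun u hu => by
    have := h ▸ coe_le_eSup' hu
    exact_mod_cast this
  have hbdd : BddAbove S := ⟨t, hub⟩
  have h1 : sSup S ≤ t := csSup_le hne hub
  have h2 : t ≤ sSup S := by
    have : eSup S ≤ ((sSup S : ℝ≥0) : ℝ≥0∞) :=
      eSup_le' fun u hu => by exact_mod_cast le_csSup hbdd hu
    rw [h] at this
    exact_mod_cast this
  have : t = sSup S := le_antisymm h2 h1
  rw [this]
  exact csSup_mem_closure hne hbdd

private lemma eInf_apply_eq {Λ : ℝ≥0 → ℝ} (hΛ : Continuous Λ) {c : ℝ} {P : Set ℝ≥0}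
    (hP : ∀ u ∈ P, Λ u = c) {t : ℝ≥0} (h : eInf P = (t : ℝ≥0∞)) : Λ t = c := by
  have h1 : t ∈ closure P := eInf_mem_closure h
  have h2 : t ∈ closure {u | Λ u = c} := closure_mono (fun u hu => hP u hu) h1
  rwa [IsClosed.closure_eq (isClosed_eq hΛ continuous_const)] at h2

private lemma eSup_apply_eq {Λ : ℝ≥0 → ℝ} (hΛ : Continuous Λ) {c : ℝ} {P : Set ℝ≥0}
    (hne : P.Nonempty) (hP : ∀ u ∈ P, Λ u = c) {t : ℝ≥0} (h : eSup P = (t : ℝ≥0∞)) :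
    Λ t = c := by
  have h1 : t ∈ closure P := eSup_mem_closure hne h
  have h2 : t ∈ closure {u | Λ u = c} := closure_mono (fun u hu => hP u hu) h1
  rwa [IsClosed.closure_eq (isClosed_eq hΛ continuous_const)] at h2

private lemma const_of_open {c : ℝ≥0 → ℝ} (hc : Continuous c) {a b : ℝ≥0} (hab : a ≤ b)
    (H : ∀ x y : ℝ≥0, a < x → x ≤ y → y < b → c y = c x) : c b = c a := by
  rcases eq_or_lt_of_le hab with rfl | hab
  · rfl
  obtain ⟨m, ham, hmb⟩ := exists_between hab
  have key : ∀ x ∈ Set.Ioo a b, c x = c m := by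
    rintro x ⟨hax, hxb⟩
    rcases le_total x m with hxm | hmx
    · exact (H x m hax hxm hmb).symm
    · exact H m x ham hmx hxb
  have hclo : closure (Set.Ioo a b) = Set.Icc a b := closure_Ioo hab.ne
  haveI hna : (𝓝[Set.Ioo a b] a).NeBot :=
    mem_closure_iff_nhdsWithin_neBot.mp (by rw [hclo]; exact ⟨le_rfl, hab.le⟩)
  haveI hnb : (𝓝[Set.Ioo a b] b).NeBot :=
    mem_closure_iff_nhdsWithin_neBot.mp (by rw [hclo]; exact ⟨hab.le, le_rfl⟩)
  have ta : Filter.Tendsto c (𝓝[Set.Ioo a b] a) (𝓝 (c a)) :=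
    (hc.tendsto a).mono_left nhdsWithin_le_nhds
  have ta' : Filter.Tendsto c (𝓝[Set.Ioo a b] a) (𝓝 (c m)) :=
    tendsto_const_nhds.congr' (eventually_mem_nhdsWithin.mono fun x hx => (key x hx).symm)
  have tb : Filter.Tendsto c (𝓝[Set.Ioo a b] b) (𝓝 (c b)) :=
    (hc.tendsto b).mono_left nhdsWithin_le_nhds
  have tb' : Filter.Tendsto c (𝓝[Set.Ioo a b] b) (𝓝 (c m)) :=
    tendsto_const_nhds.congr' (eventually_mem_nhdsWithin.mono fun x hx => (key x hx).symm)
  rw [tendsto_nhds_unique ta ta', tendsto_nhds_unique tb tb']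

theorem h_cut_monotone_between_times
    (h : ℝ) (hh : 0 < h) (f c0 ch : ℝ≥0 → ℝ) (hf : Continuous f) (hf0 : f 0 = 0)
    (hp : SkorohodPair h f c0 ch)
    (Λ : ℝ≥0 → ℝ) (hΛ : ∀ t, Λ t = f t + ch t + c0 t)
    (n : ℕ) (hfin : retSeq h Λ (n + 1) < ⊤) :
    (∀ a b : ℝ≥0, retSeq h Λ n ≤ (a : ℝ≥0∞) → a ≤ b → (b : ℝ≥0∞) ≤ exitSeq h Λ (n + 1) →
      f b - Λ b ≤ f a - Λ a) ∧
    (∀ a b : ℝ≥0, exitSeq h Λ (n + 1) ≤ (a : ℝ≥0∞) → a ≤ b → (b : ℝ≥0∞) ≤ retSeq h Λ (n + 1) →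
      f a - Λ a ≤ f b - Λ b) := by
  have hΛc : Continuous Λ := by
    have : Λ = fun t => f t + ch t + c0 t := funext hΛ
    rw [this]
    exact (hf.add hp.conth).add hp.cont0
  have hΛ0 : Λ 0 = 0 := by rw [hΛ]; simp [hf0, hp.inith, hp.init0]
  set Tn : ℝ≥0∞ := eInf {v : ℝ≥0 | retSeq h Λ n < (v : ℝ≥0∞) ∧ Λ v = h} with hTndef
  have hret1 : retSeq h Λ (n + 1) = eInf {u : ℝ≥0 | Tn < (u : ℝ≥0∞) ∧ Λ u = 0} := rfl
  -- ordering of the extended times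
  have hTle : Tn ≤ retSeq h Λ (n + 1) := by
    rw [hret1]; exact le_eInf' fun u hu => hu.1.le
  have htle : retSeq h Λ n ≤ Tn := le_eInf' fun u hu => hu.1.le
  -- real versions
  set t1 : ℝ≥0 := (retSeq h Λ (n + 1)).toNNReal with ht1def
  have ht1 : (t1 : ℝ≥0∞) = retSeq h Λ (n + 1) := ENNReal.coe_toNNReal hfin.ne
  set T : ℝ≥0 := Tn.toNNReal with hTdef
  have hT : (T : ℝ≥0∞) = Tn := ENNReal.coe_toNNReal (lt_of_le_of_lt hTle hfin).ne
  set t0 : ℝ≥0 := (retSeq h Λ n).toNNReal with ht0def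
  have ht0 : (t0 : ℝ≥0∞) = retSeq h Λ n :=
    ENNReal.coe_toNNReal (lt_of_le_of_lt (le_trans htle hTle) hfin).ne
  have hΛt1 : Λ t1 = 0 :=
    eInf_apply_eq hΛc (P := {u : ℝ≥0 | Tn < (u : ℝ≥0∞) ∧ Λ u = 0})
      (fun u hu => hu.2) (by rw [← hret1, ← ht1])
  have hΛT : Λ T = h :=
    eInf_apply_eq hΛc (P := {v : ℝ≥0 | retSeq h Λ n < (v : ℝ≥0∞) ∧ Λ v = h})
      (fun u hu => hu.2) (by rw [← hTndef, ← hT])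
  have hΛt0 : Λ t0 = 0 := by
    cases n with
    | zero => simp only [retSeq, ht0def]; simpa using hΛ0
    | succ m =>
      exact eInf_apply_eq hΛc
        (P := {u : ℝ≥0 |
          eInf {v : ℝ≥0 | retSeq h Λ m < (v : ℝ≥0∞) ∧ Λ v = h} < (u : ℝ≥0∞) ∧ Λ u = 0})
        (fun u hu => hu.2) (by rw [show eInf {u : ℝ≥0 |
          eInf {v : ℝ≥0 | retSeq h Λ m < (v : ℝ≥0∞) ∧ Λ v = h} < (u : ℝ≥0∞) ∧ Λ u = 0}
            = retSeq h Λ (m + 1) from rfl, ← ht0])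
  have ht0T : t0 < T := by
    have hle : t0 ≤ T := by
      have := htle; rw [← ht0, ← hT] at this; exact_mod_cast this
    rcases lt_or_eq_of_le hle with hlt | heq
    · exact hlt
    · exact absurd (heq ▸ hΛt0) (by rw [hΛT]; exact hh.ne')
  have hTt1 : T ≤ t1 := by
    have := hTle; rw [← hT, ← ht1] at this; exact_mod_cast this
  -- the exit-time set
  set E : Set ℝ≥0 := {u : ℝ≥0 | retSeq h Λ n ≤ (u : ℝ≥0∞) ∧
      (u : ℝ≥0∞) < retSeq h Λ (n + 1) ∧ Λ u = 0} with hEdef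
  have hexit : exitSeq h Λ (n + 1) = eSup E := rfl
  have ht0E : t0 ∈ E := by
    refine ⟨ht0.ge, ?_, hΛt0⟩
    rw [ht0]
    calc retSeq h Λ n ≤ Tn := htle
      _ = (T : ℝ≥0∞) := hT.symm
      _ < (t1 : ℝ≥0∞) := by
          exact_mod_cast lt_of_le_of_ne hTt1 (fun hTe => (hTe ▸ hΛT ▸ hΛt1 ▸ hh.ne) rfl)
      _ = retSeq h Λ (n + 1) := ht1
  have hEne : E.Nonempty := ⟨t0, ht0E⟩
  have hEleT : ∀ u ∈ E, (u : ℝ≥0∞) ≤ (T : ℝ≥0∞) := by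
    intro u hu
    by_contra hcon
    push_neg at hcon
    have hmem : u ∈ {u : ℝ≥0 | Tn < (u : ℝ≥0∞) ∧ Λ u = 0} := ⟨hT ▸ hcon, hu.2.2⟩
    have := eInf_le_coe' hmem
    rw [← hret1] at this
    exact absurd hu.2.1 (not_lt.mpr this)
  have hsupleT : eSup E ≤ (T : ℝ≥0∞) := eSup_le' hEleT
  set s : ℝ≥0 := (eSup E).toNNReal with hsdef
  have hs : (s : ℝ≥0∞) = eSup E :=
    ENNReal.coe_toNNReal (lt_of_le_of_lt hsupleT (by exact_mod_cast ENNReal.coe_lt_top)).ne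
  have hΛs : Λ s = 0 := eSup_apply_eq hΛc (P := E) hEne (fun u hu => hu.2.2) hs.symm
  have ht0s : t0 ≤ s := by
    have := hs ▸ coe_le_eSup' ht0E; exact_mod_cast this
  have hsT : s < T := by
    have hle : s ≤ T := by have := hs ▸ hsupleT; exact_mod_cast this
    rcases lt_or_eq_of_le hle with hlt | heq
    · exact hlt
    · exact absurd (heq ▸ hΛs) (by rw [hΛT]; exact hh.ne')
  -- Λ avoids h on [t0, s]
  have hne_h : ∀ t : ℝ≥0, t0 ≤ t → t ≤ s → Λ t ≠ h := by
    intro t h0t hts hcon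
    rcases lt_or_eq_of_le h0t with hlt | heq
    · have hmem : t ∈ {v : ℝ≥0 | retSeq h Λ n < (v : ℝ≥0∞) ∧ Λ v = h} :=
        ⟨by rw [← ht0]; exact_mod_cast hlt, hcon⟩
      have := eInf_le_coe' hmem
      rw [← hTndef, ← hT] at this
      have hTt : T ≤ t := by exact_mod_cast this
      exact absurd (lt_of_le_of_lt hts hsT) (not_lt.mpr hTt)
    · rw [← heq, hΛt0] at hcon; exact hh.ne hcon
  -- Λ avoids 0 on (s, t1)
  have hne_0 : ∀ t : ℝ≥0, s < t → t < t1 → Λ t ≠ 0 := by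
    intro t hst htt1 hcon
    have hmem : t ∈ E := by
      refine ⟨?_, ?_, hcon⟩
      · rw [← ht0]; exact_mod_cast (ht0s.trans hst.le)
      · rw [← ht1]; exact_mod_cast htt1
    have := hs ▸ coe_le_eSup' hmem
    have : t ≤ s := by exact_mod_cast this
    exact absurd hst (not_lt.mpr this)
  constructor
  · intro a b ha hab hb
    rw [← ht0] at ha
    rw [hexit, ← hs] at hb
    have ha' : t0 ≤ a := by exact_mod_cast ha
    have hb' : b ≤ s := by exact_mod_cast hb
    have hch : ch b = ch a := by
      refine hp.flath a b hab fun t ht => ?_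
      rw [← hΛ]
      exact hne_h t (ha'.trans ht.1) (ht.2.trans hb')
    have hc0 : c0 a ≤ c0 b := hp.mono0 hab
    rw [hΛ, hΛ]
    linarith [hch]
  · intro a b ha hab hb
    rw [hexit, ← hs] at ha
    rw [← ht1] at hb
    have ha' : s ≤ a := by exact_mod_cast ha
    have hb' : b ≤ t1 := by exact_mod_cast hb
    have hc0 : c0 b = c0 a := by
      refine const_of_open hp.cont0 hab fun x y hax hxy hyb => ?_
      refine hp.flat0 x y hxy fun t ht => ?_
      rw [← hΛ]
      exact hne_0 t (lt_of_le_of_lt ha' (lt_of_lt_of_le hax ht.1))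
        (lt_of_le_of_lt ht.2 (lt_of_lt_of_le hyb hb'))
    have hch : ch b ≤ ch a := hp.antih hab
    rw [hΛ, hΛ]
    linarith [hc0]
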